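/- Let Ω ⊆ ℝⁿ be open and let K₁, K₂ ⊆ Ω be compact. Then the relative (p(·),ϑ)-capacity is strongly subadditive: cap_{p,ϑ}(K₁ ∪ K₂, Ω) + cap_{p,ϑ}(K₁ ∩ K₂, Ω) ≤ cap_{p,ϑ}(K₁, Ω) + cap_{p,ϑ}(K₂, Ω). -/

import Mathlib

open MeasureTheory Metric Set Filter ENNReal

noncomputable section

/-- The weighted variable exponent modular `ρ_{p,ϑ,A}(g) = ∫_A |g|^{p(x)} ϑ(x) dx`. -/
def rhoMod {n : ℕ} (p ϑ : EuclideanSpace ℝ (Fin n) → ℝ)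
    (A : Set (EuclideanSpace ℝ (Fin n))) (g : EuclideanSpace ℝ (Fin n) → ℝ) : ℝ≥0∞ :=
  ∫⁻ x in A, ENNReal.ofReal (|g x| ^ p x * ϑ x)

/-- Relative `(p(·),ϑ)`-capacity of a compact set `K` with respect to an open set `Ω`:
the infimum of `ρ_{p,ϑ,Ω}(‖Df‖)` over `C¹` functions with compact support contained in `Ω`
which are `≥ 1` on `K` (with `sInf ∅ = ∞`). -/
def relCapK {n : ℕ} (p ϑ : EuclideanSpace ℝ (Fin n) → ℝ)
    (K Ω : Set (EuclideanSpace ℝ (Fin n))) : ℝ≥0∞ :=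
  sInf ((fun f => rhoMod p ϑ Ω fun x => ‖fderiv ℝ f x‖) ''
    {f : EuclideanSpace ℝ (Fin n) → ℝ |
      ContDiff ℝ 1 f ∧ IsCompact (tsupport f) ∧ tsupport f ⊆ Ω ∧ ∀ x ∈ K, 1 ≤ f x})

/-- Relative capacity of an open subset `U ⊆ Ω`. -/
def relCapO {n : ℕ} (p ϑ : EuclideanSpace ℝ (Fin n) → ℝ)
    (U Ω : Set (EuclideanSpace ℝ (Fin n))) : ℝ≥0∞ :=
  ⨆ (K : Set (EuclideanSpace ℝ (Fin n))) (_ : IsCompact K ∧ K ⊆ U), relCapK p ϑ K Ω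

/-- Relative capacity of an arbitrary subset `A ⊆ Ω`. -/
def relCap {n : ℕ} (p ϑ : EuclideanSpace ℝ (Fin n) → ℝ)
    (A Ω : Set (EuclideanSpace ℝ (Fin n))) : ℝ≥0∞ :=
  ⨅ (U : Set (EuclideanSpace ℝ (Fin n))) (_ : IsOpen U ∧ A ⊆ U ∧ U ⊆ Ω), relCapO p ϑ U Ω

/-- The Sobolev `(p(·),ϑ)`-capacity of `A ⊆ ℝⁿ`. -/
def sobCap {n : ℕ} (p ϑ : EuclideanSpace ℝ (Fin n) → ℝ)
    (A : Set (EuclideanSpace ℝ (Fin n))) : ℝ≥0∞ :=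
  sInf ((fun f => ∫⁻ x, ENNReal.ofReal ((|f x| ^ p x + ‖fderiv ℝ f x‖ ^ p x) * ϑ x)) ''
    {f : EuclideanSpace ℝ (Fin n) → ℝ |
      ContDiff ℝ 1 f ∧ ∃ U, IsOpen U ∧ A ⊆ U ∧ ∀ x ∈ U, 1 ≤ f x})

/-- The weighted measure `μ_ϑ(A) = ∫_A ϑ(x) dx`. -/
def muW {n : ℕ} (ϑ : EuclideanSpace ℝ (Fin n) → ℝ)
    (A : Set (EuclideanSpace ℝ (Fin n))) : ℝ≥0∞ :=
  ∫⁻ x in A, ENNReal.ofReal (ϑ x)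

/-- `μ_ϑ` is doubling with constant `cd`. -/
def DoublingW {n : ℕ} (ϑ : EuclideanSpace ℝ (Fin n) → ℝ) (cd : ℝ) : Prop :=
  1 ≤ cd ∧ ∀ (x : EuclideanSpace ℝ (Fin n)) (r : ℝ), 0 < r →
    muW ϑ (ball x (2 * r)) ≤ ENNReal.ofReal cd * muW ϑ (ball x r)

/-- Poincaré hypothesis with constant `c` for the weight `ϑ`. -/
def PoincareHyp {n : ℕ} (ϑ : EuclideanSpace ℝ (Fin n) → ℝ) (c : ℝ) : Prop :=
  ∀ Ω : Set (EuclideanSpace ℝ (Fin n)), IsOpen Ω → Bornology.IsBounded Ω →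
    ∀ f : EuclideanSpace ℝ (Fin n) → ℝ, ContDiff ℝ 1 f → IsCompact (tsupport f) →
      tsupport f ⊆ Ω →
      ∫ x in Ω, |f x| * ϑ x ≤ c * diam Ω * ∫ x in Ω, ‖fderiv ℝ f x‖ * ϑ x

/-- Embedding hypothesis `L^{p(·)}_ϑ(Ω) ↪ L¹_ϑ(Ω)` with constants `c₁ Ω`. -/
def EmbeddingHyp {n : ℕ} (p ϑ : EuclideanSpace ℝ (Fin n) → ℝ)
    (c₁ : Set (EuclideanSpace ℝ (Fin n)) → ℝ) : Prop :=
  ∀ Ω : Set (EuclideanSpace ℝ (Fin n)), IsOpen Ω → Bornology.IsBounded Ω →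
    0 < c₁ Ω ∧ ∀ g : EuclideanSpace ℝ (Fin n) → ℝ, Measurable g → 1 ≤ rhoMod p ϑ Ω g →
      (∫⁻ x in Ω, ENNReal.ofReal (|g x| * ϑ x)) ≤ ENNReal.ofReal (c₁ Ω) * rhoMod p ϑ Ω g

/-- The Wiener sum `W^{sum}_{p,ϑ}(A,x₀)`. -/
def wienerSum {n : ℕ} (p ϑ : EuclideanSpace ℝ (Fin n) → ℝ)
    (A : Set (EuclideanSpace ℝ (Fin n))) (x₀ : EuclideanSpace ℝ (Fin n)) : ℝ≥0∞ :=
  ∑' i : ℕ,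
    (relCap p ϑ (A ∩ ball x₀ ((2 : ℝ) ^ (-(i : ℤ)))) (ball x₀ ((2 : ℝ) ^ (1 - (i : ℤ)))) /
        relCap p ϑ (ball x₀ ((2 : ℝ) ^ (-(i : ℤ)))) (ball x₀ ((2 : ℝ) ^ (1 - (i : ℤ))))) ^
      (1 / (p x₀ - 1))

/-- The Wiener type integral `W_{p,ϑ}(A,x₀)`. -/
def wienerInt {n : ℕ} (p ϑ : EuclideanSpace ℝ (Fin n) → ℝ)
    (A : Set (EuclideanSpace ℝ (Fin n))) (x₀ : EuclideanSpace ℝ (Fin n)) : ℝ≥0∞ :=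
  ∫⁻ r in Set.Ioo (0 : ℝ) 1,
    (relCap p ϑ (A ∩ ball x₀ r) (ball x₀ (2 * r)) /
        relCap p ϑ (ball x₀ r) (ball x₀ (2 * r))) ^ (1 / (p x₀ - 1)) / ENNReal.ofReal r


open scoped Topology NNReal

section Helpers

variable {E : Type*} [NormedAddCommGroup E] [NormedSpace ℝ E]

lemma sqrtAux_pos {t ε : ℝ} (hε : 0 < ε) : 0 < t * t + ε * ε := by nlinarith

lemma abs_le_sqrtAux (t : ℝ) (ε : ℝ) : |t| ≤ Real.sqrt (t * t + ε * ε) := by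
  rw [← Real.sqrt_sq_eq_abs]
  exact Real.sqrt_le_sqrt (by nlinarith)

lemma sqrtAux_le {t ε : ℝ} (hε : 0 < ε) : Real.sqrt (t * t + ε * ε) ≤ |t| + ε := by
  have h : Real.sqrt (t * t + ε * ε) ≤ Real.sqrt ((|t| + ε) ^ 2) :=
    Real.sqrt_le_sqrt (by nlinarith [abs_nonneg t, sq_abs t])
  rwa [Real.sqrt_sq (by positivity)] at h

lemma sigma_abs_le {t ε : ℝ} (hε : 0 < ε) : |t / Real.sqrt (t * t + ε * ε)| ≤ 1 := by
  rw [abs_div, abs_of_nonneg (Real.sqrt_nonneg _)]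
  have h2 : 0 < Real.sqrt (t * t + ε * ε) := Real.sqrt_pos.2 (sqrtAux_pos hε)
  rw [div_le_one h2]; exact abs_le_sqrtAux t ε

lemma majorize {q a b t : ℝ} (hq : 1 ≤ q) (ha : 0 ≤ a) (hb : 0 ≤ b) (ht : 0 ≤ t) (ht1 : t ≤ 1) :
    (t*a+(1-t)*b) ^ q + ((1-t)*a+t*b) ^ q ≤ a ^ q + b ^ q := by
  have hc := convexOn_rpow hq
  have ht' : (0:ℝ) ≤ 1 - t := by linarith
  have htt : t + (1 - t) = 1 := by ring
  have h1 := hc.2 (mem_Ici.2 ha) (mem_Ici.2 hb) ht ht' htt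
  have h2 := hc.2 (mem_Ici.2 hb) (mem_Ici.2 ha) ht ht' htt
  simp only [smul_eq_mul] at h1 h2
  rw [show (1-t)*a+t*b = t*b+(1-t)*a by ring]
  linarith

/-- The smoothed combination: `s = 1` gives a smooth approximation of `max f₁ f₂`,
`s = -1` of `min f₁ f₂`. -/
def comb (f₁ f₂ : E → ℝ) (ε s : ℝ) (x : E) : ℝ :=
  (f₁ x + f₂ x + s * (Real.sqrt ((f₁ x - f₂ x) * (f₁ x - f₂ x) + ε * ε) - ε)) / 2

lemma comb_contDiff {f₁ f₂ : E → ℝ} (h₁ : ContDiff ℝ 1 f₁) (h₂ : ContDiff ℝ 1 f₂)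
    {ε : ℝ} (hε : 0 < ε) (s : ℝ) : ContDiff ℝ 1 (comb f₁ f₂ ε s) := by
  unfold comb
  have hin : ContDiff ℝ 1 (fun x => (f₁ x - f₂ x) * (f₁ x - f₂ x) + ε * ε) :=
    ((h₁.sub h₂).mul (h₁.sub h₂)).add contDiff_const
  have hs : ContDiff ℝ 1 (fun x => Real.sqrt ((f₁ x - f₂ x) * (f₁ x - f₂ x) + ε * ε)) :=
    hin.sqrt fun x => (sqrtAux_pos hε).ne'
  exact ((h₁.add h₂).add (contDiff_const.mul (hs.sub contDiff_const))).div_const 2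

omit [NormedAddCommGroup E] [NormedSpace ℝ E] in
lemma comb_zero {f₁ f₂ : E → ℝ} {ε : ℝ} (hε : 0 < ε) (s : ℝ) {x : E}
    (h1 : f₁ x = 0) (h2 : f₂ x = 0) : comb f₁ f₂ ε s x = 0 := by
  simp only [comb, h1, h2]
  rw [show (0:ℝ) - 0 = 0 by ring, show (0:ℝ) * 0 + ε * ε = ε * ε by ring]
  rw [show ε * ε = ε ^ 2 by ring, Real.sqrt_sq hε.le]
  ring

lemma comb_tsupport {f₁ f₂ : E → ℝ} {ε : ℝ} (hε : 0 < ε) (s : ℝ) :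
    tsupport (comb f₁ f₂ ε s) ⊆ tsupport f₁ ∪ tsupport f₂ := by
  rw [tsupport, tsupport, tsupport, ← closure_union]
  apply closure_mono
  intro x hx
  by_contra h
  simp only [mem_union, Function.mem_support, not_or, not_not] at h hx
  exact hx (comb_zero hε s h.1 h.2)

omit [NormedAddCommGroup E] [NormedSpace ℝ E] in
lemma comb_max_ge {f₁ f₂ : E → ℝ} {ε : ℝ} (hε : 0 < ε) {x : E}
    (h : 1 ≤ f₁ x ∨ 1 ≤ f₂ x) : 1 - ε / 2 ≤ comb f₁ f₂ ε 1 x := by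
  have h1 := abs_le_sqrtAux (f₁ x - f₂ x) ε
  unfold comb
  rcases h with h | h
  · have := le_abs_self (f₁ x - f₂ x); linarith
  · have := neg_abs_le (f₁ x - f₂ x); linarith

omit [NormedAddCommGroup E] [NormedSpace ℝ E] in
lemma comb_min_ge {f₁ f₂ : E → ℝ} {ε : ℝ} (hε : 0 < ε) {x : E}
    (h1 : 1 ≤ f₁ x) (h2 : 1 ≤ f₂ x) : 1 ≤ comb f₁ f₂ ε (-1) x := by
  have hs := sqrtAux_le (t := f₁ x - f₂ x) hε
  unfold comb
  rcases abs_cases (f₁ x - f₂ x) with ⟨he, _⟩ | ⟨he, _⟩ <;> rw [he] at hs <;> linarith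

lemma comb_hasFDerivAt {f₁ f₂ : E → ℝ} (h₁ : ContDiff ℝ 1 f₁) (h₂ : ContDiff ℝ 1 f₂)
    {ε : ℝ} (hε : 0 < ε) (s : ℝ) (x : E) :
    HasFDerivAt (comb f₁ f₂ ε s)
      ((((1 + s * ((f₁ x - f₂ x) / Real.sqrt ((f₁ x - f₂ x) * (f₁ x - f₂ x) + ε * ε))) / 2) •
          fderiv ℝ f₁ x) +
        (((1 - s * ((f₁ x - f₂ x) / Real.sqrt ((f₁ x - f₂ x) * (f₁ x - f₂ x) + ε * ε))) / 2) •
          fderiv ℝ f₂ x)) x := by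
  have d₁ : HasFDerivAt f₁ (fderiv ℝ f₁ x) x :=
    (h₁.differentiable one_ne_zero x).hasFDerivAt
  have d₂ : HasFDerivAt f₂ (fderiv ℝ f₂ x) x :=
    (h₂.differentiable one_ne_zero x).hasFDerivAt
  set D₁ := fderiv ℝ f₁ x
  set D₂ := fderiv ℝ f₂ x
  set t := f₁ x - f₂ x with ht
  have hq : HasFDerivAt (fun y => f₁ y - f₂ y) (D₁ - D₂) x := d₁.sub d₂
  have hin : HasFDerivAt (fun y => (f₁ y - f₂ y) * (f₁ y - f₂ y) + ε * ε)
      (t • (D₁ - D₂) + t • (D₁ - D₂)) x := (hq.mul hq).add_const _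
  have hpos : (0:ℝ) < t * t + ε * ε := sqrtAux_pos hε
  have hsq : HasFDerivAt (fun y => Real.sqrt ((f₁ y - f₂ y) * (f₁ y - f₂ y) + ε * ε))
      ((1 / (2 * Real.sqrt (t * t + ε * ε))) • (t • (D₁ - D₂) + t • (D₁ - D₂))) x :=
    hin.sqrt hpos.ne'
  have h5 : HasFDerivAt (fun y => (2:ℝ)⁻¹ * ((f₁ y + f₂ y) +
      s * (Real.sqrt ((f₁ y - f₂ y) * (f₁ y - f₂ y) + ε * ε) - ε)))
      ((2:ℝ)⁻¹ • ((D₁ + D₂) + s • ((1 / (2 * Real.sqrt (t * t + ε * ε))) •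
        (t • (D₁ - D₂) + t • (D₁ - D₂))))) x :=
    (((d₁.add d₂).add ((hsq.sub_const ε).const_mul s)).const_mul (2:ℝ)⁻¹)
  have hco : comb f₁ f₂ ε s = fun y => (2:ℝ)⁻¹ * ((f₁ y + f₂ y) +
      s * (Real.sqrt ((f₁ y - f₂ y) * (f₁ y - f₂ y) + ε * ε) - ε)) := by
    funext y; unfold comb; ring
  rw [hco]
  convert h5 using 1
  have hr : Real.sqrt (t * t + ε * ε) ≠ 0 := (Real.sqrt_pos.2 hpos).ne'
  ext v
  simp only [ContinuousLinearMap.add_apply, ContinuousLinearMap.coe_smul',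
    Pi.smul_apply, smul_eq_mul, ContinuousLinearMap.sub_apply,
    ContinuousLinearMap.zero_apply, sub_zero]
  field_simp
  ring

lemma comb_norm_fderiv_le {f₁ f₂ : E → ℝ} (h₁ : ContDiff ℝ 1 f₁) (h₂ : ContDiff ℝ 1 f₂)
    {ε : ℝ} (hε : 0 < ε) {s : ℝ} (hs : |s| ≤ 1) (x : E) :
    ‖fderiv ℝ (comb f₁ f₂ ε s) x‖ ≤
      ((1 + s * ((f₁ x - f₂ x) / Real.sqrt ((f₁ x - f₂ x) * (f₁ x - f₂ x) + ε * ε))) / 2) *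
          ‖fderiv ℝ f₁ x‖ +
        ((1 - s * ((f₁ x - f₂ x) / Real.sqrt ((f₁ x - f₂ x) * (f₁ x - f₂ x) + ε * ε))) / 2) *
          ‖fderiv ℝ f₂ x‖ := by
  rw [(comb_hasFDerivAt h₁ h₂ hε s x).fderiv]
  set σ := (f₁ x - f₂ x) / Real.sqrt ((f₁ x - f₂ x) * (f₁ x - f₂ x) + ε * ε) with hσdef
  have hσ : |σ| ≤ 1 := sigma_abs_le hε
  have hsσ : |s * σ| ≤ 1 := by
    rw [abs_mul]
    calc |s| * |σ| ≤ 1 * 1 := by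
          exact mul_le_mul hs hσ (abs_nonneg _) zero_le_one
      _ = 1 := by ring
  rcases abs_le.1 hsσ with ⟨hl, hr⟩
  refine (norm_add_le _ _).trans ?_
  rw [norm_smul, norm_smul, Real.norm_eq_abs, Real.norm_eq_abs,
    abs_of_nonneg (by linarith : (0:ℝ) ≤ (1 + s * σ) / 2),
    abs_of_nonneg (by linarith : (0:ℝ) ≤ (1 - s * σ) / 2)]

lemma comb_pointwise {f₁ f₂ : E → ℝ} (h₁ : ContDiff ℝ 1 f₁) (h₂ : ContDiff ℝ 1 f₂)
    {ε : ℝ} (hε : 0 < ε) (x : E) {q : ℝ} (hq : 1 ≤ q) :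
    ‖fderiv ℝ (comb f₁ f₂ ε 1) x‖ ^ q + ‖fderiv ℝ (comb f₁ f₂ ε (-1)) x‖ ^ q ≤
      ‖fderiv ℝ f₁ x‖ ^ q + ‖fderiv ℝ f₂ x‖ ^ q := by
  set σ := (f₁ x - f₂ x) / Real.sqrt ((f₁ x - f₂ x) * (f₁ x - f₂ x) + ε * ε) with hσdef
  have hσ : |σ| ≤ 1 := sigma_abs_le hε
  rcases abs_le.1 hσ with ⟨hσl, hσr⟩
  set t := (1 + σ) / 2 with htdef
  have ht : 0 ≤ t := by rw [htdef]; linarith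
  have ht1 : t ≤ 1 := by rw [htdef]; linarith
  set a := ‖fderiv ℝ f₁ x‖ with hadef
  set b := ‖fderiv ℝ f₂ x‖ with hbdef
  have hu : ‖fderiv ℝ (comb f₁ f₂ ε 1) x‖ ≤ t * a + (1 - t) * b := by
    have h := comb_norm_fderiv_le h₁ h₂ hε (s := 1) (by norm_num) x
    rw [← hσdef, ← hadef, ← hbdef] at h
    calc ‖fderiv ℝ (comb f₁ f₂ ε 1) x‖ ≤ (1 + 1 * σ) / 2 * a + (1 - 1 * σ) / 2 * b := h
      _ = t * a + (1 - t) * b := by rw [htdef]; ring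
  have hw : ‖fderiv ℝ (comb f₁ f₂ ε (-1)) x‖ ≤ (1 - t) * a + t * b := by
    have h := comb_norm_fderiv_le h₁ h₂ hε (s := -1) (by norm_num) x
    rw [← hσdef, ← hadef, ← hbdef] at h
    calc ‖fderiv ℝ (comb f₁ f₂ ε (-1)) x‖
        ≤ (1 + -1 * σ) / 2 * a + (1 - -1 * σ) / 2 * b := h
      _ = (1 - t) * a + t * b := by rw [htdef]; ring
  have hq0 : (0:ℝ) ≤ q := by linarith
  have hta : (0:ℝ) ≤ t * a + (1 - t) * b := by nlinarith [norm_nonneg (fderiv ℝ f₁ x), norm_nonneg (fderiv ℝ f₂ x)]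
  calc ‖fderiv ℝ (comb f₁ f₂ ε 1) x‖ ^ q + ‖fderiv ℝ (comb f₁ f₂ ε (-1)) x‖ ^ q
      ≤ (t * a + (1 - t) * b) ^ q + ((1 - t) * a + t * b) ^ q :=
        add_le_add (Real.rpow_le_rpow (norm_nonneg _) hu hq0)
          (Real.rpow_le_rpow (norm_nonneg _) hw hq0)
    _ ≤ a ^ q + b ^ q := majorize hq (norm_nonneg _) (norm_nonneg _) ht ht1

end Helpers

lemma key_bound {n : ℕ} {p ϑ : EuclideanSpace ℝ (Fin n) → ℝ} (hp : Measurable p) {P : ℝ}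
    (hP1 : 1 ≤ P)
    (hae : ∀ᵐ x ∂(volume : Measure (EuclideanSpace ℝ (Fin n))), 1 ≤ p x ∧ p x ≤ P)
    (hϑpos : ∀ x, 0 ≤ ϑ x) (hϑm : AEMeasurable ϑ (volume : Measure (EuclideanSpace ℝ (Fin n))))
    {Ω K₁ K₂ : Set (EuclideanSpace ℝ (Fin n))}
    {f₁ f₂ : EuclideanSpace ℝ (Fin n) → ℝ}
    (h₁ : ContDiff ℝ 1 f₁) (h₁c : IsCompact (tsupport f₁)) (h₁s : tsupport f₁ ⊆ Ω)
    (h₁K : ∀ x ∈ K₁, 1 ≤ f₁ x)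
    (h₂ : ContDiff ℝ 1 f₂) (h₂c : IsCompact (tsupport f₂)) (h₂s : tsupport f₂ ⊆ Ω)
    (h₂K : ∀ x ∈ K₂, 1 ≤ f₂ x)
    {ε : ℝ} (hε0 : 0 < ε) (hε1 : ε < 1) :
    relCapK p ϑ (K₁ ∪ K₂) Ω + relCapK p ϑ (K₁ ∩ K₂) Ω ≤
      ENNReal.ofReal ((1 - ε / 2)⁻¹ ^ P) *
        (rhoMod p ϑ Ω (fun x => ‖fderiv ℝ f₁ x‖) +
          rhoMod p ϑ Ω (fun x => ‖fderiv ℝ f₂ x‖)) := by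
  have hc0 : (0:ℝ) < 1 - ε / 2 := by linarith
  set c := (1 - ε / 2)⁻¹ with hcdef
  have hcpos : 0 < c := by positivity
  have hc1 : 1 ≤ c := by
    rw [hcdef, le_inv_comm₀ one_pos hc0]; linarith
  set M := comb f₁ f₂ ε 1 with hMdef
  set m := comb f₁ f₂ ε (-1) with hmdef
  set cM := fun x => c * M x with hcMdef
  have hM : ContDiff ℝ 1 M := comb_contDiff h₁ h₂ hε0 1
  have hm : ContDiff ℝ 1 m := comb_contDiff h₁ h₂ hε0 (-1)
  have hcM : ContDiff ℝ 1 cM := contDiff_const.mul hM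
  -- supports
  have hMts : tsupport M ⊆ tsupport f₁ ∪ tsupport f₂ := comb_tsupport hε0 1
  have hmts : tsupport m ⊆ tsupport f₁ ∪ tsupport f₂ := comb_tsupport hε0 (-1)
  have hcMts : tsupport cM ⊆ tsupport M := by
    apply closure_mono
    intro x hx
    simp only [Function.mem_support] at hx ⊢
    intro h0
    exact hx (by rw [hcMdef]; simp [h0])
  have hUcpt : IsCompact (tsupport f₁ ∪ tsupport f₂) := h₁c.union h₂c
  have hUsub : tsupport f₁ ∪ tsupport f₂ ⊆ Ω := union_subset h₁s h₂s
  have hcMcpt : IsCompact (tsupport cM) :=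
    hUcpt.of_isClosed_subset (isClosed_tsupport _) (hcMts.trans hMts)
  have hmcpt : IsCompact (tsupport m) :=
    hUcpt.of_isClosed_subset (isClosed_tsupport _) hmts
  -- values
  have hcMval : ∀ x ∈ K₁ ∪ K₂, 1 ≤ cM x := by
    intro x hx
    have hM1 : 1 - ε / 2 ≤ M x := by
      apply comb_max_ge hε0
      rcases hx with hx | hx
      · exact Or.inl (h₁K x hx)
      · exact Or.inr (h₂K x hx)
    calc (1:ℝ) = c * (1 - ε / 2) := (inv_mul_cancel₀ hc0.ne').symm
      _ ≤ c * M x := mul_le_mul_of_nonneg_left hM1 hcpos.le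
  have hmval : ∀ x ∈ K₁ ∩ K₂, 1 ≤ m x := fun x hx =>
    comb_min_ge hε0 (h₁K x hx.1) (h₂K x hx.2)
  -- capacity bounds
  have hcap1 : relCapK p ϑ (K₁ ∪ K₂) Ω ≤ rhoMod p ϑ Ω (fun x => ‖fderiv ℝ cM x‖) :=
    sInf_le ⟨cM, ⟨hcM, hcMcpt, (hcMts.trans hMts).trans hUsub, hcMval⟩, rfl⟩
  have hcap2 : relCapK p ϑ (K₁ ∩ K₂) Ω ≤ rhoMod p ϑ Ω (fun x => ‖fderiv ℝ m x‖) :=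
    sInf_le ⟨m, ⟨hm, hmcpt, hmts.trans hUsub, hmval⟩, rfl⟩
  -- measurability
  have hmeasM : AEMeasurable (fun x => ENNReal.ofReal (|‖fderiv ℝ M x‖| ^ p x * ϑ x))
      ((volume : Measure (EuclideanSpace ℝ (Fin n))).restrict Ω) := by
    apply AEMeasurable.restrict
    exact ENNReal.measurable_ofReal.comp_aemeasurable
      ((((hM.continuous_fderiv one_ne_zero).norm.abs.measurable).pow hp).aemeasurable.mul hϑm)
  have hmeasf₁ : AEMeasurable (fun x => ENNReal.ofReal (|‖fderiv ℝ f₁ x‖| ^ p x * ϑ x))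
      ((volume : Measure (EuclideanSpace ℝ (Fin n))).restrict Ω) := by
    apply AEMeasurable.restrict
    exact ENNReal.measurable_ofReal.comp_aemeasurable
      ((((h₁.continuous_fderiv one_ne_zero).norm.abs.measurable).pow hp).aemeasurable.mul hϑm)
  have haeΩ : ∀ᵐ x ∂((volume : Measure (EuclideanSpace ℝ (Fin n))).restrict Ω),
      1 ≤ p x ∧ p x ≤ P := ae_restrict_of_ae hae
  -- step 1 : rho(cM) ≤ ofReal (c^P) * rho(M)
  have hstep1 : rhoMod p ϑ Ω (fun x => ‖fderiv ℝ cM x‖) ≤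
      ENNReal.ofReal (c ^ P) * rhoMod p ϑ Ω (fun x => ‖fderiv ℝ M x‖) := by
    rw [rhoMod, rhoMod, ← lintegral_const_mul' _ _ ENNReal.ofReal_ne_top]
    apply lintegral_mono_ae
    filter_upwards [haeΩ] with x hx
    have hdcM : fderiv ℝ cM x = c • fderiv ℝ M x :=
      fderiv_const_mul (hM.differentiable one_ne_zero x) c
    rw [hdcM, ← ENNReal.ofReal_mul (by positivity)]
    apply ENNReal.ofReal_le_ofReal
    simp only [abs_norm]
    rw [norm_smul, Real.norm_eq_abs, abs_of_pos hcpos,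
      Real.mul_rpow hcpos.le (norm_nonneg _)]
    have hcP : c ^ p x ≤ c ^ P := Real.rpow_le_rpow_of_exponent_le hc1 hx.2
    have h0 : (0:ℝ) ≤ ‖fderiv ℝ M x‖ ^ p x := Real.rpow_nonneg (norm_nonneg _) _
    calc c ^ p x * ‖fderiv ℝ M x‖ ^ p x * ϑ x
        ≤ c ^ P * ‖fderiv ℝ M x‖ ^ p x * ϑ x := by
          apply mul_le_mul_of_nonneg_right _ (hϑpos x)
          exact mul_le_mul_of_nonneg_right hcP h0
      _ = c ^ P * (‖fderiv ℝ M x‖ ^ p x * ϑ x) := by ring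
  -- step 2 : rho(M) + rho(m) ≤ rho(f₁) + rho(f₂)
  have hstep2 : rhoMod p ϑ Ω (fun x => ‖fderiv ℝ M x‖) + rhoMod p ϑ Ω (fun x => ‖fderiv ℝ m x‖) ≤
      rhoMod p ϑ Ω (fun x => ‖fderiv ℝ f₁ x‖) + rhoMod p ϑ Ω (fun x => ‖fderiv ℝ f₂ x‖) := by
    rw [rhoMod, rhoMod, rhoMod, rhoMod, ← lintegral_add_left' hmeasM, ← lintegral_add_left' hmeasf₁]
    apply lintegral_mono_ae
    filter_upwards [haeΩ] with x hx
    have hpw := comb_pointwise h₁ h₂ hε0 x hx.1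
    rw [← hMdef, ← hmdef] at hpw
    have hnn : ∀ g : EuclideanSpace ℝ (Fin n) →L[ℝ] ℝ, (0:ℝ) ≤ ‖g‖ ^ p x * ϑ x := fun g => by
      have := Real.rpow_nonneg (norm_nonneg g) (p x); have := hϑpos x; positivity
    simp only [abs_norm]
    rw [← ENNReal.ofReal_add (hnn _) (hnn _), ← ENNReal.ofReal_add (hnn _) (hnn _)]
    apply ENNReal.ofReal_le_ofReal
    have := mul_le_mul_of_nonneg_right hpw (hϑpos x)
    nlinarith [this]
  -- combine
  have hone : (1:ℝ≥0∞) ≤ ENNReal.ofReal (c ^ P) := by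
    rw [ENNReal.one_le_ofReal]
    calc (1:ℝ) = c ^ (0:ℝ) := (Real.rpow_zero c).symm
      _ ≤ c ^ P := Real.rpow_le_rpow_of_exponent_le hc1 (by linarith)
  calc relCapK p ϑ (K₁ ∪ K₂) Ω + relCapK p ϑ (K₁ ∩ K₂) Ω
      ≤ ENNReal.ofReal (c ^ P) * rhoMod p ϑ Ω (fun x => ‖fderiv ℝ M x‖) +
          rhoMod p ϑ Ω (fun x => ‖fderiv ℝ m x‖) :=
        add_le_add (hcap1.trans hstep1) hcap2
    _ ≤ ENNReal.ofReal (c ^ P) * rhoMod p ϑ Ω (fun x => ‖fderiv ℝ M x‖) +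
          ENNReal.ofReal (c ^ P) * rhoMod p ϑ Ω (fun x => ‖fderiv ℝ m x‖) := by
        gcongr
        exact le_mul_of_one_le_left zero_le hone
    _ = ENNReal.ofReal (c ^ P) * (rhoMod p ϑ Ω (fun x => ‖fderiv ℝ M x‖) +
          rhoMod p ϑ Ω (fun x => ‖fderiv ℝ m x‖)) := by rw [mul_add]
    _ ≤ ENNReal.ofReal (c ^ P) * (rhoMod p ϑ Ω (fun x => ‖fderiv ℝ f₁ x‖) +
          rhoMod p ϑ Ω (fun x => ‖fderiv ℝ f₂ x‖)) := mul_le_mul_right hstep2 _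


/-- Strong subadditivity of the relative `(p(·),ϑ)`-capacity on compact sets. -/
theorem stmt3 (n : ℕ) (hn : 1 ≤ n) (p ϑ : EuclideanSpace ℝ (Fin n) → ℝ)
    (hp : Measurable p)
    (hpm : 1 < essInf p (volume : Measure (EuclideanSpace ℝ (Fin n))))
    (hpb : Filter.IsBoundedUnder (· ≤ ·) (ae (volume : Measure (EuclideanSpace ℝ (Fin n)))) p)
    (hϑpos : ∀ x, 0 < ϑ x)
    (hϑloc : LocallyIntegrable ϑ (volume : Measure (EuclideanSpace ℝ (Fin n))))
    (Ω K₁ K₂ : Set (EuclideanSpace ℝ (Fin n))) (hΩ : IsOpen Ω)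
    (hK₁ : IsCompact K₁) (hK₂ : IsCompact K₂) (hK₁Ω : K₁ ⊆ Ω) (hK₂Ω : K₂ ⊆ Ω) :
    relCapK p ϑ (K₁ ∪ K₂) Ω + relCapK p ϑ (K₁ ∩ K₂) Ω ≤
      relCapK p ϑ K₁ Ω + relCapK p ϑ K₂ Ω := by
  -- bounds on the exponent
  obtain ⟨P₀, hP₀⟩ := hpb
  rw [Filter.eventually_map] at hP₀
  set P := max P₀ 1 with hPdef
  have hP1 : (1:ℝ) ≤ P := le_max_right _ _
  have hPae : ∀ᵐ x ∂(volume : Measure (EuclideanSpace ℝ (Fin n))), p x ≤ P :=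
    hP₀.mono fun x hx => hx.trans (le_max_left _ _)
  have hpm' := hpm
  rw [essInf_eq_sSup] at hpm'
  have hne : {a : ℝ | (volume : Measure (EuclideanSpace ℝ (Fin n))) {x | p x < a} = 0}.Nonempty := by
    by_contra h
    rw [Set.not_nonempty_iff_eq_empty] at h
    rw [h, Real.sSup_empty] at hpm'
    linarith
  obtain ⟨a, haS, ha1⟩ := exists_lt_of_lt_csSup hne hpm'
  have hp1 : ∀ᵐ x ∂(volume : Measure (EuclideanSpace ℝ (Fin n))), 1 ≤ p x := by
    have hset : {x : EuclideanSpace ℝ (Fin n) | ¬ a ≤ p x} = {x | p x < a} := by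
      ext x; simp [not_le]
    have h' : ∀ᵐ x ∂(volume : Measure (EuclideanSpace ℝ (Fin n))), a ≤ p x := by
      rw [ae_iff, hset]; exact haS
    exact h'.mono fun x hx => le_trans ha1.le hx
  have hae : ∀ᵐ x ∂(volume : Measure (EuclideanSpace ℝ (Fin n))), 1 ≤ p x ∧ p x ≤ P :=
    hp1.and hPae
  have hϑm : AEMeasurable ϑ (volume : Measure (EuclideanSpace ℝ (Fin n))) :=
    hϑloc.aestronglyMeasurable.aemeasurable
  -- approximation argument
  apply ENNReal.le_of_forall_pos_le_add
  intro η hη hS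
  have hS1 : relCapK p ϑ K₁ Ω ≠ ⊤ := (ENNReal.add_lt_top.1 hS).1.ne
  have hS2 : relCapK p ϑ K₂ Ω ≠ ⊤ := (ENNReal.add_lt_top.1 hS).2.ne
  have hη4 : ((η / 4 : ℝ≥0) : ℝ≥0∞) ≠ 0 := by
    simp only [ne_eq, ENNReal.coe_eq_zero]
    positivity
  have hlt1 : relCapK p ϑ K₁ Ω < relCapK p ϑ K₁ Ω + ((η / 4 : ℝ≥0) : ℝ≥0∞) :=
    ENNReal.lt_add_right hS1 hη4
  have hlt2 : relCapK p ϑ K₂ Ω < relCapK p ϑ K₂ Ω + ((η / 4 : ℝ≥0) : ℝ≥0∞) :=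
    ENNReal.lt_add_right hS2 hη4
  rw [relCapK] at hlt1 hlt2
  obtain ⟨v₁, ⟨f₁, hf₁, rfl⟩, hv₁⟩ := sInf_lt_iff.1 hlt1
  obtain ⟨v₂, ⟨f₂, hf₂, rfl⟩, hv₂⟩ := sInf_lt_iff.1 hlt2
  obtain ⟨hf₁d, hf₁c, hf₁s, hf₁K⟩ := hf₁
  obtain ⟨hf₂d, hf₂c, hf₂s, hf₂K⟩ := hf₂
  set ρ₁ := rhoMod p ϑ Ω fun x => ‖fderiv ℝ f₁ x‖ with hρ₁
  set ρ₂ := rhoMod p ϑ Ω fun x => ‖fderiv ℝ f₂ x‖ with hρ₂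
  set T := relCapK p ϑ K₁ Ω + relCapK p ϑ K₂ Ω + ((η / 2 : ℝ≥0) : ℝ≥0∞) with hTdef
  have hρT : ρ₁ + ρ₂ ≤ T := by
    calc ρ₁ + ρ₂ ≤ (relCapK p ϑ K₁ Ω + ((η / 4 : ℝ≥0) : ℝ≥0∞)) +
        (relCapK p ϑ K₂ Ω + ((η / 4 : ℝ≥0) : ℝ≥0∞)) := add_le_add hv₁.le hv₂.le
      _ = T := by
        rw [hTdef]
        have : ((η / 4 : ℝ≥0) : ℝ≥0∞) + ((η / 4 : ℝ≥0) : ℝ≥0∞) = ((η / 2 : ℝ≥0) : ℝ≥0∞) := by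
          rw [← ENNReal.coe_add]
          congr 1
          apply NNReal.coe_injective
          push_cast
          ring
        rw [← this]
        ring
  have hTlt : T < relCapK p ϑ K₁ Ω + relCapK p ϑ K₂ Ω + (η : ℝ≥0∞) := by
    rw [hTdef]
    apply ENNReal.add_lt_add_left hS.ne
    exact_mod_cast (by exact NNReal.half_lt_self hη.ne' : η / 2 < η)
  -- limit as ε → 0⁺
  have hcont : Tendsto (fun ε : ℝ => ENNReal.ofReal ((1 - ε / 2)⁻¹ ^ P)) (𝓝[>] (0:ℝ)) (𝓝 1) := by
    have hreal : ContinuousAt (fun ε : ℝ => (1 - ε / 2)⁻¹ ^ P) 0 := by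
      apply ContinuousAt.rpow_const
      · exact ((continuous_const.sub (continuous_id.div_const 2)).continuousAt).inv₀ (by norm_num)
      · left; norm_num
    have h0 : ((1 - (0:ℝ) / 2)⁻¹ ^ P) = 1 := by norm_num
    have := (ENNReal.continuous_ofReal.continuousAt.comp hreal).tendsto
    rw [Function.comp] at this
    simp only [h0, ENNReal.ofReal_one] at this
    exact this.mono_left nhdsWithin_le_nhds
  have hmul : Tendsto (fun ε : ℝ => ENNReal.ofReal ((1 - ε / 2)⁻¹ ^ P) * T) (𝓝[>] (0:ℝ))
      (𝓝 T) := by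
    have := ENNReal.Tendsto.mul_const (b := T) hcont (Or.inl one_ne_zero)
    rwa [one_mul] at this
  have hev : ∀ᶠ ε in 𝓝[>] (0:ℝ), ENNReal.ofReal ((1 - ε / 2)⁻¹ ^ P) * T <
      relCapK p ϑ K₁ Ω + relCapK p ϑ K₂ Ω + (η : ℝ≥0∞) :=
    hmul.eventually_lt_const hTlt
  have hIoo : ∀ᶠ ε in 𝓝[>] (0:ℝ), ε ∈ Ioo (0:ℝ) 1 :=
    Ioo_mem_nhdsGT_of_mem (by constructor <;> norm_num)
  obtain ⟨ε, hεlt, hε01⟩ := (hev.and hIoo).exists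
  calc relCapK p ϑ (K₁ ∪ K₂) Ω + relCapK p ϑ (K₁ ∩ K₂) Ω
      ≤ ENNReal.ofReal ((1 - ε / 2)⁻¹ ^ P) * (ρ₁ + ρ₂) :=
        key_bound hp hP1 hae (fun x => (hϑpos x).le) hϑm hf₁d hf₁c hf₁s hf₁K
          hf₂d hf₂c hf₂s hf₂K hε01.1 hε01.2
    _ ≤ ENNReal.ofReal ((1 - ε / 2)⁻¹ ^ P) * T := mul_le_mul_right hρT _
    _ ≤ relCapK p ϑ K₁ Ω + relCapK p ϑ K₂ Ω + (η : ℝ≥0∞) := hεlt.le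


end
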